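/- Let ℓ ≥ 2. The group with presentation ⟨x, y, z | x² = z^{2^{ℓ-1}}, y² = x², z^{2^ℓ} = 1, [y,x] = z, [z,x] = z^{-2}, [z,y] = z^{-2}⟩ is isomorphic to the generalized quaternion group Q_{2^{ℓ+2}} of order 2^{ℓ+2}, via a ↦ y, b ↦ xy where Q_{2^{ℓ+2}} = ⟨a, b | a² = b^{2^ℓ}, b^{2^{ℓ+1}} = 1, b^a = b⁻¹⟩. -/

import Mathlib

open FreeGroup in
/-- Relators of G_⚅(1,1,ℓ) = ⟨x,y,z | x² = z^{2^{ℓ-1}}, y² = x², z^{2^ℓ} = 1, [y,x] = z,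
[z,x] = z⁻², [z,y] = z⁻²⟩ (convention [y,x] = y⁻¹x⁻¹yx; generators 0 ↦ x, 1 ↦ y, 2 ↦ z). -/
def relsG6 (ℓ : ℕ) : Set (FreeGroup (Fin 3)) :=
  { (of 0) ^ 2 * ((of 2) ^ (2 ^ (ℓ - 1)))⁻¹,
    (of 1) ^ 2 * ((of 0) ^ 2)⁻¹,
    (of 2) ^ (2 ^ ℓ),
    (of 1)⁻¹ * (of 0)⁻¹ * of 1 * of 0 * (of 2)⁻¹,
    (of 2)⁻¹ * (of 0)⁻¹ * of 2 * of 0 * (of 2) ^ 2,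
    (of 2)⁻¹ * (of 1)⁻¹ * of 2 * of 1 * (of 2) ^ 2 }

abbrev G6 (ℓ : ℕ) := PresentedGroup (relsG6 ℓ)

open FreeGroup in
/-- Relators of the generalized quaternion group
Q_{2^{ℓ+2}} = ⟨a, b | a² = b^{2^ℓ}, b^{2^{ℓ+1}} = 1, b^a = b⁻¹⟩
(with b^a = a⁻¹ba; generators 0 ↦ a, 1 ↦ b). -/
def relsQ (ℓ : ℕ) : Set (FreeGroup (Fin 2)) :=
  { (of 0) ^ 2 * ((of 1) ^ (2 ^ ℓ))⁻¹,
    (of 1) ^ (2 ^ (ℓ + 1)),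
    (of 0)⁻¹ * of 1 * of 0 * of 1 }

abbrev Qgen (ℓ : ℕ) := PresentedGroup (relsQ ℓ)

section Helpers

variable {G : Type*} [Group G]

lemma pres_rel {α : Type*} {rels : Set (FreeGroup α)} {r : FreeGroup α} (h : r ∈ rels) :
    PresentedGroup.mk rels r = 1 :=
  (QuotientGroup.eq_one_iff r).mpr (Subgroup.subset_normalClosure h)

lemma pres_mk_of {α : Type*} (rels : Set (FreeGroup α)) (x : α) :
    PresentedGroup.mk rels (FreeGroup.of x) = PresentedGroup.of x := rfl

lemma hsum_aux {ℓ : ℕ} (hℓ : 1 ≤ ℓ) : 2 ^ (ℓ - 1) + 2 ^ (ℓ - 1) = 2 ^ ℓ := by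
  rw [← two_mul, ← pow_succ']; congr 1; omega

lemma hmul_aux {ℓ : ℕ} (hℓ : 1 ≤ ℓ) : 2 * 2 ^ (ℓ - 1) = 2 ^ ℓ := by
  rw [← pow_succ']; congr 1; omega

lemma hsum2_aux (ℓ : ℕ) : 2 ^ ℓ + 2 ^ ℓ = 2 ^ (ℓ + 1) := by
  rw [← two_mul, ← pow_succ']

/-- From the quaternion relations, the six G6 relators hold for
X = B*A⁻¹, Y = A, Z = (B^2)⁻¹. -/
lemma q_side {ℓ : ℕ} (hℓ : 1 ≤ ℓ) {A B : G}
    (hq1 : A ^ 2 = B ^ 2 ^ ℓ) (hq2 : B ^ 2 ^ (ℓ + 1) = 1)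
    (hq3 : A⁻¹ * B * A * B = 1) :
    (B * A⁻¹) ^ 2 * (((B ^ 2)⁻¹) ^ 2 ^ (ℓ - 1))⁻¹ = 1 ∧
    A ^ 2 * ((B * A⁻¹) ^ 2)⁻¹ = 1 ∧
    ((B ^ 2)⁻¹) ^ 2 ^ ℓ = 1 ∧
    A⁻¹ * (B * A⁻¹)⁻¹ * A * (B * A⁻¹) * ((B ^ 2)⁻¹)⁻¹ = 1 ∧
    ((B ^ 2)⁻¹)⁻¹ * (B * A⁻¹)⁻¹ * (B ^ 2)⁻¹ * (B * A⁻¹) * ((B ^ 2)⁻¹) ^ 2 = 1 ∧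
    ((B ^ 2)⁻¹)⁻¹ * A⁻¹ * (B ^ 2)⁻¹ * A * ((B ^ 2)⁻¹) ^ 2 = 1 := by
  have h1 : A⁻¹ * B * A = B⁻¹ := by
    have h : (A⁻¹ * B * A) * B = 1 := by rw [← hq3]
    exact mul_eq_one_iff_eq_inv.mp h
  have h1' : A⁻¹ * B⁻¹ * A = B := by
    calc A⁻¹ * B⁻¹ * A = (A⁻¹ * B * A)⁻¹ := by group
    _ = B⁻¹⁻¹ := by rw [h1]
    _ = B := inv_inv B
  have h2 : A * B * A⁻¹ = B⁻¹ := by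
    calc A * B * A⁻¹ = A * (A⁻¹ * B⁻¹ * A) * A⁻¹ := by rw [h1']
    _ = B⁻¹ := by group
  have h2' : A * B⁻¹ * A⁻¹ = B := by
    calc A * B⁻¹ * A⁻¹ = (A * B * A⁻¹)⁻¹ := by group
    _ = B⁻¹⁻¹ := by rw [h2]
    _ = B := inv_inv B
  have hX2 : (B * A⁻¹) ^ 2 = (B ^ 2 ^ ℓ)⁻¹ := by
    calc (B * A⁻¹) ^ 2 = B * (A⁻¹ * B * A) * A⁻¹ * A⁻¹ := by rw [pow_two]; group
    _ = B * B⁻¹ * A⁻¹ * A⁻¹ := by rw [h1]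
    _ = (A ^ 2)⁻¹ := by group
    _ = (B ^ 2 ^ ℓ)⁻¹ := by rw [hq1]
  have hZpow : ∀ n : ℕ, ((B ^ 2)⁻¹) ^ n = (B ^ (2 * n))⁻¹ := by
    intro n; rw [inv_pow, ← pow_mul]
  refine ⟨?_, ?_, ?_, ?_, ?_, ?_⟩
  · rw [hX2, hZpow, hmul_aux hℓ, inv_inv, inv_mul_cancel]
  · rw [hX2, hq1, inv_inv, ← pow_add, hsum2_aux, hq2]
  · rw [hZpow, ← pow_succ', hq2, inv_one]
  · calc A⁻¹ * (B * A⁻¹)⁻¹ * A * (B * A⁻¹) * ((B ^ 2)⁻¹)⁻¹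
        = B⁻¹ * (A * B * A⁻¹) * B ^ 2 := by group
    _ = B⁻¹ * B⁻¹ * B ^ 2 := by rw [h2]
    _ = 1 := by group
  · calc ((B ^ 2)⁻¹)⁻¹ * (B * A⁻¹)⁻¹ * (B ^ 2)⁻¹ * (B * A⁻¹) * ((B ^ 2)⁻¹) ^ 2
        = B ^ 2 * ((A * B⁻¹ * A⁻¹) * (A * B⁻¹ * A⁻¹)) * (B ^ 2)⁻¹ * (B ^ 2)⁻¹ := by group
    _ = B ^ 2 * (B * B) * (B ^ 2)⁻¹ * (B ^ 2)⁻¹ := by rw [h2']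
    _ = 1 := by group
  · calc ((B ^ 2)⁻¹)⁻¹ * A⁻¹ * (B ^ 2)⁻¹ * A * ((B ^ 2)⁻¹) ^ 2
        = B ^ 2 * ((A⁻¹ * B⁻¹ * A) * (A⁻¹ * B⁻¹ * A)) * (B ^ 2)⁻¹ * (B ^ 2)⁻¹ := by group
    _ = B ^ 2 * (B * B) * (B ^ 2)⁻¹ * (B ^ 2)⁻¹ := by rw [h1']
    _ = 1 := by group

/-- From the G6 relations, the key identity (X*Y)^2 = Z⁻¹ and the three Q relators
for A = Y, B = X*Y. -/
lemma g6_side {ℓ : ℕ} (hℓ : 1 ≤ ℓ) {X Y Z : G}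
    (hg1 : X ^ 2 = Z ^ 2 ^ (ℓ - 1)) (hg2 : Y ^ 2 = X ^ 2)
    (hg3 : Z ^ 2 ^ ℓ = 1) (hg4 : Y⁻¹ * X⁻¹ * Y * X = Z)
    (hg6 : Z⁻¹ * Y⁻¹ * Z * Y * Z ^ 2 = 1) :
    (X * Y) ^ 2 = Z⁻¹ ∧
    Y ^ 2 * ((X * Y) ^ 2 ^ ℓ)⁻¹ = 1 ∧
    (X * Y) ^ 2 ^ (ℓ + 1) = 1 ∧
    Y⁻¹ * (X * Y) * Y * (X * Y) = 1 := by
  have hyx : Y * X = X * Y * Z := by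
    calc Y * X = X * Y * (Y⁻¹ * X⁻¹ * Y * X) := by group
    _ = X * Y * Z := by rw [hg4]
  have t : Y⁻¹ * Z * Y * Z = 1 := by
    calc Y⁻¹ * Z * Y * Z = Z * (Z⁻¹ * Y⁻¹ * Z * Y * Z ^ 2) * Z⁻¹ := by group
    _ = 1 := by rw [hg6]; group
  have hzy : Z * Y = Y * Z⁻¹ := by
    calc Z * Y = Y * (Y⁻¹ * Z * Y * Z) * Z⁻¹ := by group
    _ = Y * Z⁻¹ := by rw [t]; group
  have key : (X * Y) ^ 2 = Z⁻¹ := by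
    calc (X * Y) ^ 2 = X * (Y * X) * Y := by rw [pow_two]; group
    _ = X * (X * Y * Z) * Y := by rw [hyx]
    _ = X ^ 2 * (Y * (Z * Y)) := by simp only [pow_two, mul_assoc]
    _ = X ^ 2 * (Y * (Y * Z⁻¹)) := by rw [hzy]
    _ = X ^ 2 * Y ^ 2 * Z⁻¹ := by simp only [pow_two, mul_assoc]
    _ = X ^ 2 * X ^ 2 * Z⁻¹ := by rw [hg2]
    _ = Z ^ 2 ^ (ℓ - 1) * Z ^ 2 ^ (ℓ - 1) * Z⁻¹ := by rw [hg1]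
    _ = Z ^ 2 ^ ℓ * Z⁻¹ := by rw [← pow_add, hsum_aux hℓ]
    _ = Z⁻¹ := by rw [hg3]; group
  refine ⟨key, ?_, ?_, ?_⟩
  · have : (X * Y) ^ 2 ^ ℓ = (Z ^ 2 ^ (ℓ - 1))⁻¹ := by
      rw [← hmul_aux hℓ, pow_mul, key, inv_pow]
    rw [this, hg2, hg1, inv_inv, ← pow_add, hsum_aux hℓ, hg3]
  · rw [pow_succ' 2 ℓ, pow_mul, key, inv_pow, hg3, inv_one]
  · have e1 : Y⁻¹ * (X * Y) * Y * (X * Y) = Y⁻¹ * X * Y ^ 2 * X * Y := by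
      simp only [pow_two, mul_assoc]
    have e2 : Y⁻¹ * X * X ^ 2 * X * Y = Y⁻¹ * (X ^ 2 * X ^ 2) * Y := by
      simp only [pow_two, mul_assoc]
    rw [e1, hg2, e2, hg1, ← pow_add, hsum_aux hℓ, hg3]
    group

end Helpers

/-- For ℓ ≥ 2, the group G_⚅(1,1,ℓ) is isomorphic to the generalized
quaternion group Q_{2^{ℓ+2}} via a ↦ y, b ↦ xy. -/
theorem stmt13 (ℓ : ℕ) (hℓ : 2 ≤ ℓ) :
    ∃ φ : Qgen ℓ ≃* G6 ℓ,
      φ (PresentedGroup.of 0) = PresentedGroup.of 1 ∧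
      φ (PresentedGroup.of 1) = PresentedGroup.of 0 * PresentedGroup.of 1 := by
  have hℓ1 : 1 ≤ ℓ := le_trans one_le_two hℓ
  -- the relations of G6 as equations among the generators
  have hg1 : (PresentedGroup.of 0 : G6 ℓ) ^ 2 = (PresentedGroup.of 2) ^ 2 ^ (ℓ - 1) := by
    have h := pres_rel (Set.mem_insert _ _ : _ ∈ relsG6 ℓ)
    simp only [map_mul, map_pow, map_inv, pres_mk_of] at h
    exact mul_inv_eq_one.mp h
  have hg2 : (PresentedGroup.of 1 : G6 ℓ) ^ 2 = (PresentedGroup.of 0) ^ 2 := by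
    have h := pres_rel (Set.mem_insert_of_mem _ (Set.mem_insert _ _) : _ ∈ relsG6 ℓ)
    simp only [map_mul, map_pow, map_inv, pres_mk_of] at h
    exact mul_inv_eq_one.mp h
  have hg3 : (PresentedGroup.of 2 : G6 ℓ) ^ 2 ^ ℓ = 1 := by
    have h := pres_rel (Set.mem_insert_of_mem _ (Set.mem_insert_of_mem _
      (Set.mem_insert _ _)) : _ ∈ relsG6 ℓ)
    simp only [map_mul, map_pow, map_inv, pres_mk_of] at h
    exact h
  have hg4 : (PresentedGroup.of 1 : G6 ℓ)⁻¹ * (PresentedGroup.of 0)⁻¹ *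
      PresentedGroup.of 1 * PresentedGroup.of 0 = PresentedGroup.of 2 := by
    have h := pres_rel (Set.mem_insert_of_mem _ (Set.mem_insert_of_mem _
      (Set.mem_insert_of_mem _ (Set.mem_insert _ _))) : _ ∈ relsG6 ℓ)
    simp only [map_mul, map_pow, map_inv, pres_mk_of] at h
    exact mul_inv_eq_one.mp h
  have hg6 : (PresentedGroup.of 2 : G6 ℓ)⁻¹ * (PresentedGroup.of 1)⁻¹ *
      PresentedGroup.of 2 * PresentedGroup.of 1 * (PresentedGroup.of 2) ^ 2 = 1 := by
    have h := pres_rel (Set.mem_insert_of_mem _ (Set.mem_insert_of_mem _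
      (Set.mem_insert_of_mem _ (Set.mem_insert_of_mem _ (Set.mem_insert_of_mem _
      (Set.mem_singleton _))))) : _ ∈ relsG6 ℓ)
    simp only [map_mul, map_pow, map_inv, pres_mk_of] at h
    exact h
  obtain ⟨key, k1, k2, k3⟩ := g6_side hℓ1 hg1 hg2 hg3 hg4 hg6
  -- the relations of Qgen as equations among the generators
  have hq1 : (PresentedGroup.of 0 : Qgen ℓ) ^ 2 = (PresentedGroup.of 1) ^ 2 ^ ℓ := by
    have h := pres_rel (Set.mem_insert _ _ : _ ∈ relsQ ℓ)
    simp only [map_mul, map_pow, map_inv, pres_mk_of] at h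
    exact mul_inv_eq_one.mp h
  have hq2 : (PresentedGroup.of 1 : Qgen ℓ) ^ 2 ^ (ℓ + 1) = 1 := by
    have h := pres_rel (Set.mem_insert_of_mem _ (Set.mem_insert _ _) : _ ∈ relsQ ℓ)
    simp only [map_mul, map_pow, map_inv, pres_mk_of] at h
    exact h
  have hq3 : (PresentedGroup.of 0 : Qgen ℓ)⁻¹ * PresentedGroup.of 1 *
      PresentedGroup.of 0 * PresentedGroup.of 1 = 1 := by
    have h := pres_rel (Set.mem_insert_of_mem _ (Set.mem_insert_of_mem _
      (Set.mem_singleton _)) : _ ∈ relsQ ℓ)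
    simp only [map_mul, map_pow, map_inv, pres_mk_of] at h
    exact h
  obtain ⟨p1, p2, p3, p4, p5, p6⟩ := q_side hℓ1 hq1 hq2 hq3
  -- the forward homomorphism a ↦ y, b ↦ xy
  have hf : ∀ r ∈ relsQ ℓ,
      FreeGroup.lift (![PresentedGroup.of 1,
        PresentedGroup.of 0 * PresentedGroup.of 1] : Fin 2 → G6 ℓ) r = 1 := by
    intro r hr
    simp only [relsQ, Set.mem_insert_iff, Set.mem_singleton_iff] at hr
    rcases hr with rfl | rfl | rfl <;>
      simp only [map_mul, map_pow, map_inv, FreeGroup.lift_apply_of, Matrix.cons_val_zero,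
        Matrix.cons_val_one, Matrix.head_cons]
    · exact k1
    · exact k2
    · exact k3
  -- the backward homomorphism x ↦ ba⁻¹, y ↦ a, z ↦ b⁻²
  have hg : ∀ r ∈ relsG6 ℓ,
      FreeGroup.lift (![PresentedGroup.of 1 * (PresentedGroup.of 0)⁻¹,
        PresentedGroup.of 0, ((PresentedGroup.of 1) ^ 2)⁻¹] : Fin 3 → Qgen ℓ) r = 1 := by
    intro r hr
    simp only [relsG6, Set.mem_insert_iff, Set.mem_singleton_iff] at hr
    rcases hr with rfl | rfl | rfl | rfl | rfl | rfl <;>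
      simp only [map_mul, map_pow, map_inv, FreeGroup.lift_apply_of, Matrix.cons_val_zero,
        Matrix.cons_val_one, Matrix.head_cons, Matrix.cons_val_two, Matrix.tail_cons]
    · exact p1
    · exact p2
    · exact p3
    · exact p4
    · exact p5
    · exact p6
  set f : Qgen ℓ →* G6 ℓ := PresentedGroup.toGroup hf with hfdef
  set g : G6 ℓ →* Qgen ℓ := PresentedGroup.toGroup hg with hgdef
  have hgf : g.comp f = MonoidHom.id (Qgen ℓ) := by
    ext i
    fin_cases i <;>
      simp only [MonoidHom.comp_apply, MonoidHom.id_apply, hfdef, hgdef,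
        PresentedGroup.toGroup.of, Matrix.cons_val_zero, Matrix.cons_val_one,
        Matrix.head_cons, map_mul]
    · rfl
    · show PresentedGroup.toGroup hg (PresentedGroup.of 0 * PresentedGroup.of 1) =
        PresentedGroup.of 1
      rw [map_mul, PresentedGroup.toGroup.of, PresentedGroup.toGroup.of]
      simp only [Matrix.cons_val_zero, Matrix.cons_val_one, Matrix.head_cons]
      exact inv_mul_cancel_right _ _
  have hfg : f.comp g = MonoidHom.id (G6 ℓ) := by
    ext i
    fin_cases i <;>
      simp only [MonoidHom.comp_apply, MonoidHom.id_apply, hfdef, hgdef,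
        PresentedGroup.toGroup.of, Matrix.cons_val_zero, Matrix.cons_val_one,
        Matrix.head_cons, Matrix.cons_val_two, Matrix.tail_cons, map_mul, map_inv, map_pow]
    · show PresentedGroup.toGroup hf (PresentedGroup.of 1 * (PresentedGroup.of 0)⁻¹) =
        PresentedGroup.of 0
      rw [map_mul, map_inv, PresentedGroup.toGroup.of, PresentedGroup.toGroup.of]
      simp only [Matrix.cons_val_zero, Matrix.cons_val_one, Matrix.head_cons]
      exact mul_inv_cancel_right _ _
    · rfl
    · show PresentedGroup.toGroup hf (((PresentedGroup.of 1) ^ 2)⁻¹) = PresentedGroup.of 2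
      rw [map_inv, map_pow, PresentedGroup.toGroup.of]
      simp only [Matrix.cons_val_one, Matrix.head_cons, Matrix.cons_val_zero]
      rw [key, inv_inv]
  refine ⟨MonoidHom.toMulEquiv f g hgf hfg, ?_, ?_⟩
  · show f (PresentedGroup.of 0) = _
    rw [hfdef, PresentedGroup.toGroup.of]
    simp
  · show f (PresentedGroup.of 1) = _
    rw [hfdef, PresentedGroup.toGroup.of]
    simp
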